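/- Let (M, τ) be a unital C*-algebra equipped with a faithful tracial state τ, and let θ : M → M be a unital completely positive map which is τ-symmetric, i.e., τ(θ(x)y) = τ(xθ(y)) for all x, y ∈ M (in particular τ∘θ = τ). Then for every a, x ∈ M one has ‖θ(ax) − θ(a)θ(x)‖₂ ≤ 2·‖x‖·‖a‖^{1/2}·‖a − θ(a)‖₂^{1/2}, where ‖y‖₂ = τ(y*y)^{1/2} and ‖·‖ is the C*-norm. -/

import Mathlib

open scoped ComplexOrder

/-- The 2-norm `‖y‖₂ = τ(y*y)^{1/2}` associated with a tracial state `τ`. -/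
noncomputable def traceTwoNorm {M : Type*} [NormedRing M] [StarRing M] [NormedAlgebra ℂ M]
    (τ : M →ₗ[ℂ] ℂ) (y : M) : ℝ :=
  Real.sqrt (τ (star y * y)).re

section Helpers

variable {M : Type*} [CStarAlgebra M]

private lemma ucp_star_lemma (τ : M →ₗ[ℂ] ℂ) (θ : M →ₗ[ℂ] M)
    (hτpos : ∀ x : M, 0 ≤ τ (star x * x))
    (hθcp : ∀ (n : ℕ) (y : Matrix (Fin n) (Fin n) M),
      ∃ z : Matrix (Fin n) (Fin n) M, (star y * y).map θ = star z * z)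
    (n : ℕ) (u v : Fin (n+1) → M) :
    0 ≤ τ (∑ i, ∑ j, star (v i) * θ (star (u i) * u j) * v j) := by
  obtain ⟨z, hz⟩ := hθcp (n+1) (Matrix.of fun k j => if k = 0 then u j else 0)
  have key : ∀ i j, θ (star (u i) * u j) = ∑ k, star (z k i) * z k j := by
    intro i j
    have h1 := congrFun (congrFun hz i) j
    simp only [Matrix.map_apply, Matrix.mul_apply, Matrix.star_apply, Matrix.of_apply] at h1
    rw [Finset.sum_eq_single (0 : Fin (n+1))] at h1
    · simpa using h1
    · intro b _ hb; simp [hb]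
    · simp
  have hsum : (∑ i, ∑ j, star (v i) * θ (star (u i) * u j) * v j)
      = ∑ k, star (∑ i, z k i * v i) * (∑ i, z k i * v i) := by
    simp_rw [key]
    calc (∑ i, ∑ j, star (v i) * (∑ k, star (z k i) * z k j) * v j)
        = ∑ i, ∑ j, ∑ k, (star (v i) * star (z k i)) * (z k j * v j) := by
          refine Finset.sum_congr rfl fun i _ => Finset.sum_congr rfl fun j _ => ?_
          rw [Finset.mul_sum, Finset.sum_mul]
          exact Finset.sum_congr rfl fun k _ => by noncomm_ring
      _ = ∑ i, ∑ k, ∑ j, (star (v i) * star (z k i)) * (z k j * v j) :=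
          Finset.sum_congr rfl fun i _ => Finset.sum_comm
      _ = ∑ k, ∑ i, ∑ j, (star (v i) * star (z k i)) * (z k j * v j) := Finset.sum_comm
      _ = ∑ k, star (∑ i, z k i * v i) * (∑ i, z k i * v i) := by
          refine Finset.sum_congr rfl fun k _ => ?_
          rw [star_sum, Finset.sum_mul]
          refine Finset.sum_congr rfl fun i _ => ?_
          rw [Finset.mul_sum]
          exact Finset.sum_congr rfl fun j _ => by rw [star_mul]
  rw [hsum, map_sum]
  exact Finset.sum_nonneg fun k _ => hτpos _

private lemma ucp_tau_herm (τ : M →ₗ[ℂ] ℂ) (hτpos : ∀ x : M, 0 ≤ τ (star x * x)) (u v : M) :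
    τ (star v * u) = starRingEnd ℂ (τ (star u * v)) := by
  have him : ∀ w : M, (τ (star w * w)).im = 0 := fun w => ((Complex.le_def.mp (hτpos w)).2).symm
  have h1 := him (u + v)
  have h2 := him (u + Complex.I • v)
  have e1 : star (u + v) * (u + v)
      = star u * u + (star u * v + star v * u) + star v * v := by
    simp [star_add, add_mul, mul_add]; abel
  have e2 : star (u + Complex.I • v) * (u + Complex.I • v)
      = star u * u + (Complex.I • (star u * v) - Complex.I • (star v * u)) + star v * v := by
    simp [star_add, add_mul, mul_add, star_smul, smul_smul, mul_smul_comm, smul_mul_assoc,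
      Complex.conj_I, sub_eq_add_neg, neg_smul]
    abel
  rw [e1] at h1; rw [e2] at h2
  simp only [map_add, map_sub, map_smul, Complex.add_im, Complex.sub_im, Complex.smul_im,
    Complex.smul_re, him u, him v, smul_eq_mul, Complex.mul_im, Complex.I_re,
    Complex.I_im] at h1 h2
  apply Complex.ext <;> simp only [Complex.conj_re, Complex.conj_im] <;> linarith [h1, h2]

private lemma ucp_tau_recs (τ : M →ₗ[ℂ] ℂ) (hτpos : ∀ x : M, 0 ≤ τ (star x * x)) (u v : M) :
    (τ (star u * v)).re ≤ Real.sqrt (τ (star u * u)).re * Real.sqrt (τ (star v * v)).re := by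
  have hA0 : 0 ≤ (τ (star u * u)).re := (Complex.le_def.mp (hτpos u)).1
  have hD0 : 0 ≤ (τ (star v * v)).re := (Complex.le_def.mp (hτpos v)).1
  have hCC : (τ (star v * u)).re = (τ (star u * v)).re := by
    rw [ucp_tau_herm τ hτpos u v, Complex.conj_re]
  have key : ∀ t : ℝ, 0 ≤ (τ (star u * u)).re * (t * t)
      + 2 * (τ (star u * v)).re * t + (τ (star v * v)).re := by
    intro t
    have h := hτpos ((t : ℂ) • u + v)
    have e : star ((t : ℂ) • u + v) * ((t : ℂ) • u + v)
        = (t * t) • (star u * u) + t • (star u * v)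
          + t • (star v * u) + star v * v := by
      simp only [star_add, star_smul, add_mul, mul_add, smul_mul_assoc, mul_smul_comm,
        smul_smul, smul_add, Complex.star_def, Complex.conj_ofReal]
      rw [show ((t : ℂ) * (t : ℂ)) • (star u * u) = (t * t) • (star u * u) by
        rw [← Complex.ofReal_mul]; exact (algebraMap_smul ℂ (t*t) _),
        show ((t : ℂ)) • (star u * v) = t • (star u * v) from algebraMap_smul ℂ t _,
        show ((t : ℂ)) • (star v * u) = t • (star v * u) from algebraMap_smul ℂ t _]
      abel
    rw [e] at h
    have h2 := (Complex.le_def.mp h).1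
    simp only [map_add, LinearMap.map_smul_of_tower, Complex.add_re, Complex.smul_re,
      Complex.zero_re, smul_eq_mul] at h2
    rw [hCC] at h2
    linarith
  have hdisc := discrim_le_zero key
  rw [discrim] at hdisc
  have hC2 : (τ (star u * v)).re ^ 2 ≤ (τ (star u * u)).re * (τ (star v * v)).re := by nlinarith
  calc (τ (star u * v)).re ≤ |(τ (star u * v)).re| := le_abs_self _
    _ = Real.sqrt ((τ (star u * v)).re ^ 2) := (Real.sqrt_sq_eq_abs _).symm
    _ ≤ Real.sqrt ((τ (star u * u)).re * (τ (star v * v)).re) := Real.sqrt_le_sqrt hC2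
    _ = _ := Real.sqrt_mul hA0 _

private lemma ucp_tau_nonneg [PartialOrder M] [StarOrderedRing M]
    (τ : M →ₗ[ℂ] ℂ) (hτpos : ∀ x : M, 0 ≤ τ (star x * x)) {h : M} (hh : 0 ≤ h) :
    0 ≤ τ h := by
  rw [StarOrderedRing.nonneg_iff] at hh
  induction hh using AddSubmonoid.closure_induction with
  | mem x hx => obtain ⟨s, rfl⟩ := hx; exact hτpos s
  | zero => simp
  | add a b _ _ ha hb => rw [map_add]; exact add_nonneg ha hb

private lemma ucp_norm2_bound [PartialOrder M] [StarOrderedRing M]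
    (τ : M →ₗ[ℂ] ℂ) (hτ1 : τ 1 = 1) (hτpos : ∀ x : M, 0 ≤ τ (star x * x)) (u : M) :
    (τ (star u * u)).re ≤ ‖u‖ ^ 2 := by
  have h := CStarAlgebra.star_mul_le_algebraMap_norm_sq (A := M) (a := u)
  have h2 := ucp_tau_nonneg τ hτpos (sub_nonneg.mpr h)
  rw [map_sub] at h2
  have h3 : τ (algebraMap ℝ M (‖u‖ ^ 2)) = (‖u‖ ^ 2 : ℝ) := by
    rw [Algebra.algebraMap_eq_smul_one, ← algebraMap_smul ℂ (‖u‖^2 : ℝ) (1 : M), map_smul,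
      hτ1, smul_eq_mul, mul_one]
    simp [Complex.coe_algebraMap]
  have h4 := (Complex.le_def.mp h2).1
  rw [Complex.sub_re, h3] at h4
  simp only [Complex.ofReal_re, Complex.zero_re] at h4 ⊢
  linarith

private lemma ucp_theta_one_pos (θ : M →ₗ[ℂ] M)
    (hθcp : ∀ (n : ℕ) (y : Matrix (Fin n) (Fin n) M),
      ∃ z : Matrix (Fin n) (Fin n) M, (star y * y).map θ = star z * z)
    (w : M) : ∃ r : M, θ (star w * w) = star r * r := by
  obtain ⟨z, hz⟩ := hθcp 1 (Matrix.of fun _ _ => w)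
  refine ⟨z 0 0, ?_⟩
  have h1 := congrFun (congrFun hz 0) 0
  simpa [Matrix.map_apply, Matrix.mul_apply, Matrix.star_apply, Fin.sum_univ_one] using h1

private lemma ucp_theta_sa [PartialOrder M] [StarOrderedRing M] (θ : M →ₗ[ℂ] M)
    (hθcp : ∀ (n : ℕ) (y : Matrix (Fin n) (Fin n) M),
      ∃ z : Matrix (Fin n) (Fin n) M, (star y * y).map θ = star z * z)
    {h : M} (hh : IsSelfAdjoint h) : IsSelfAdjoint (θ h) := by
  have hpos : ∀ p : M, 0 ≤ p → IsSelfAdjoint (θ p) := by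
    intro p hp
    obtain ⟨r, hr⟩ := ucp_theta_one_pos θ hθcp (CFC.sqrt p)
    rw [IsSelfAdjoint.of_nonneg (CFC.sqrt_nonneg _), CFC.sqrt_mul_sqrt_self p hp] at hr
    rw [hr]
    exact IsSelfAdjoint.star_mul_self r
  have h1 : (0:M) ≤ algebraMap ℝ M ‖h‖ + h := by
    have h0 := sub_nonneg.mpr hh.neg_algebraMap_norm_le_self
    rwa [sub_neg_eq_add, add_comm] at h0
  have h2 : (0:M) ≤ algebraMap ℝ M ‖h‖ - h := sub_nonneg.mpr hh.le_algebraMap_norm_self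
  have hdecomp : h = (1/2 : ℂ) • (algebraMap ℝ M ‖h‖ + h)
      - (1/2 : ℂ) • (algebraMap ℝ M ‖h‖ - h) := by
    rw [smul_sub, smul_add]; module
  have hhalf : IsSelfAdjoint (1/2 : ℂ) := by
    rw [IsSelfAdjoint, Complex.star_def, Complex.ext_iff]; norm_num
  rw [hdecomp, map_sub, map_smul, map_smul]
  exact (hhalf.smul (hpos _ h1)).sub (hhalf.smul (hpos _ h2))

private lemma ucp_theta_star [PartialOrder M] [StarOrderedRing M] (θ : M →ₗ[ℂ] M)
    (hθcp : ∀ (n : ℕ) (y : Matrix (Fin n) (Fin n) M),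
      ∃ z : Matrix (Fin n) (Fin n) M, (star y * y).map θ = star z * z)
    (w : M) : θ (star w) = star (θ w) := by
  have hsa1 : IsSelfAdjoint (w + star w) := by
    rw [IsSelfAdjoint, star_add, star_star, add_comm]
  have hsa2 : IsSelfAdjoint (Complex.I • w - Complex.I • star w) := by
    rw [IsSelfAdjoint, star_sub, star_smul, star_smul, star_star, Complex.star_def,
      Complex.conj_I, neg_smul, neg_smul, sub_neg_eq_add, neg_add_eq_sub]
  have k1 := ucp_theta_sa θ hθcp hsa1
  have k2 := ucp_theta_sa θ hθcp hsa2
  have hIB : Complex.I • (Complex.I • w - Complex.I • star w) = star w - w := by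
    rw [smul_sub, smul_smul, smul_smul, Complex.I_mul_I]; module
  have comb1 : θ (star w)
      = (1/2:ℂ) • (θ (w + star w) + Complex.I • θ (Complex.I • w - Complex.I • star w)) := by
    rw [← map_smul θ Complex.I, hIB, ← map_add, ← map_smul]
    congr 1
    module
  have comb2 : θ w
      = (1/2:ℂ) • (θ (w + star w) - Complex.I • θ (Complex.I • w - Complex.I • star w)) := by
    rw [← map_smul θ Complex.I, hIB, ← map_sub, ← map_smul]
    congr 1
    module
  rw [comb1, comb2, star_smul, star_sub, star_smul, k1.star_eq, k2.star_eq,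
    Complex.star_def, Complex.conj_I, neg_smul, sub_neg_eq_add]
  congr 1
  simp [Complex.ext_iff]

end Helpers

/-- Let `(M, τ)` be a unital C*-algebra with a faithful tracial state `τ` and
let `θ : M → M` be a τ-symmetric unital completely positive map. Then
`‖θ(ax) − θ(a)θ(x)‖₂ ≤ 2·‖x‖·‖a‖^{1/2}·‖a − θ(a)‖₂^{1/2}` for all `a, x ∈ M`.
(Complete positivity is expressed by: for each `n`, the entrywise application of `θ` sends
positive elements `y*y` of `Mₙ(M)` to positive elements of `Mₙ(M)`.) -/
theorem ucp_approximate_multiplicativity {M : Type*} [NormedRing M] [StarRing M] [CStarRing M]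
    [CompleteSpace M] [NormedAlgebra ℂ M] [StarModule ℂ M]
    (τ : M →ₗ[ℂ] ℂ) (θ : M →ₗ[ℂ] M)
    (hτ1 : τ 1 = 1)
    (hτpos : ∀ x : M, 0 ≤ τ (star x * x))
    (hτfaithful : ∀ x : M, τ (star x * x) = 0 → x = 0)
    (hτtracial : ∀ x y : M, τ (x * y) = τ (y * x))
    (hθ1 : θ 1 = 1)
    (hθcp : ∀ (n : ℕ) (y : Matrix (Fin n) (Fin n) M),
      ∃ z : Matrix (Fin n) (Fin n) M, (star y * y).map θ = star z * z)
    (hsym : ∀ x y : M, τ (θ x * y) = τ (x * θ y))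
    (a x : M) :
    traceTwoNorm τ (θ (a * x) - θ a * θ x) ≤
      2 * ‖x‖ * Real.sqrt ‖a‖ * Real.sqrt (traceTwoNorm τ (a - θ a)) := by
  letI : CStarAlgebra M := ⟨⟩
  letI := CStarAlgebra.spectralOrder M
  haveI := CStarAlgebra.spectralOrderedRing M
  have hθs : ∀ w : M, θ (star w) = star (θ w) := ucp_theta_star θ hθcp
  have hτθ : ∀ w : M, τ (θ w) = τ w := by
    intro w
    have h := hsym w 1
    rwa [mul_one, hθ1, mul_one] at h
  -- Kadison–Schwarz at the trace level: θ is an L²-contraction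
  have hKS : ∀ w : M, (τ (star (θ w) * θ w)).re ≤ (τ (star w * w)).re := by
    intro w
    have h := ucp_star_lemma τ θ hτpos hθcp 1 ![w, 1] ![1, -θ w]
    have idt : (∑ i, ∑ j, star ((![1, -θ w] : Fin 2 → M) i)
          * θ (star ((![w, 1] : Fin 2 → M) i) * (![w, 1] : Fin 2 → M) j)
          * (![1, -θ w] : Fin 2 → M) j)
        = θ (star w * w) - star (θ w) * θ w := by
      simp only [Fin.sum_univ_two, Matrix.cons_val_zero, Matrix.cons_val_one, Matrix.head_cons,
        star_one, one_mul, mul_one, star_neg, star_star, hθ1, hθs, star_mul]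
      noncomm_ring
    rw [idt, map_sub] at h
    have h2 := (Complex.le_def.mp h).1
    rw [Complex.sub_re, Complex.zero_re, hτθ] at h2
    linarith
  -- the key quantity E
  set Eelt : M := θ (a * (x * (star x * star a)))
      - θ (a * (x * star x)) * star (θ a)
      - θ a * θ (x * (star x * star a))
      + θ a * (θ (x * star x) * star (θ a)) with hEelt
  have hax : θ (star x * star a) = star (θ (a * x)) := by
    rw [show star x * star a = star (a * x) from (star_mul a x).symm, hθs]
  -- main inequality 1 : τ(d d*) ≤ τ(Eelt)
  have main1 : (τ ((θ (a * x) - θ a * θ x) * star (θ (a * x) - θ a * θ x))).re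
      ≤ (τ Eelt).re := by
    have h := ucp_star_lemma τ θ hτpos hθcp 2 ![star x * star a, star x, 1]
      ![1, -θ (star a), -star (θ (a * x) - θ a * θ x)]
    have idt : (∑ i, ∑ j,
          star ((![1, -θ (star a), -star (θ (a * x) - θ a * θ x)] : Fin 3 → M) i)
          * θ (star ((![star x * star a, star x, 1] : Fin 3 → M) i)
              * (![star x * star a, star x, 1] : Fin 3 → M) j)
          * (![1, -θ (star a), -star (θ (a * x) - θ a * θ x)] : Fin 3 → M) j)
        = Eelt - (θ (a * x) - θ a * θ x) * star (θ (a * x) - θ a * θ x) := by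
      rw [hEelt]
      simp only [Fin.sum_univ_three, Matrix.cons_val_zero, Matrix.cons_val_one, Matrix.head_cons,
        Matrix.cons_val_two, Matrix.tail_cons, star_one, one_mul, mul_one, star_neg, star_star,
        hθ1, hθs, hax, star_mul, star_sub, mul_assoc]
      noncomm_ring
    rw [idt, map_sub] at h
    have h2 := (Complex.le_def.mp h).1
    rw [Complex.sub_re, Complex.zero_re] at h2
    linarith
  -- main inequality 2 : τ(Eelt) ≤ ‖x‖² (τ(a a*) - τ(θa (θa)*))
  have main2 : (τ Eelt).re
      ≤ ‖x‖ ^ 2 * ((τ (a * star a)).re - (τ (θ a * star (θ a))).re) := by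
    have hg0 : (0:M) ≤ algebraMap ℝ M (‖x‖ ^ 2) - x * star x :=
      sub_nonneg.mpr CStarAlgebra.mul_star_le_algebraMap_norm_sq
    set g : M := CFC.sqrt (algebraMap ℝ M (‖x‖ ^ 2) - x * star x) with hgdef
    have hgs : star g = g := IsSelfAdjoint.of_nonneg (CFC.sqrt_nonneg _)
    have hg2 : g * g = (‖x‖ ^ 2 : ℝ) • 1 - x * star x := by
      rw [hgdef, CFC.sqrt_mul_sqrt_self _ hg0, Algebra.algebraMap_eq_smul_one]
    have h := ucp_star_lemma τ θ hτpos hθcp 1 ![g * star a, g] ![1, -θ (star a)]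
    have hA1 : a * (g * (g * star a))
        = (‖x‖^2:ℝ) • (a * star a) - a * (x * (star x * star a)) := by
      rw [← mul_assoc g g, hg2]
      simp [sub_mul, mul_sub, smul_mul_assoc, mul_smul_comm, one_mul, mul_assoc]
    have hA2 : a * (g * g) = (‖x‖^2:ℝ) • a - a * (x * star x) := by
      rw [hg2]; simp [mul_sub, mul_smul_comm, mul_assoc]
    have hA3 : g * (g * star a) = (‖x‖^2:ℝ) • (star a) - x * (star x * star a) := by
      rw [← mul_assoc g g, hg2]; simp [sub_mul, smul_mul_assoc, mul_assoc]
    have idt : (∑ i, ∑ j, star ((![1, -θ (star a)] : Fin 2 → M) i)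
          * θ (star ((![g * star a, g] : Fin 2 → M) i) * (![g * star a, g] : Fin 2 → M) j)
          * (![1, -θ (star a)] : Fin 2 → M) j)
        = (‖x‖^2 : ℝ) • (θ (a * star a) - θ a * star (θ a)) - Eelt := by
      rw [hEelt]
      simp only [Fin.sum_univ_two, Matrix.cons_val_zero, Matrix.cons_val_one, Matrix.head_cons,
        star_one, one_mul, mul_one, star_neg, star_star, hθs, star_mul, hgs, mul_assoc,
        hA1, hA2, hA3, hg2, map_sub, LinearMap.map_smul_of_tower, hθ1,
        sub_mul, mul_sub, smul_mul_assoc, mul_smul_comm, smul_sub, neg_mul, mul_neg,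
        neg_neg, smul_neg]
      abel
    rw [idt, map_sub, LinearMap.map_smul_of_tower, map_sub] at h
    have h2 := (Complex.le_def.mp h).1
    rw [Complex.sub_re, Complex.zero_re, Complex.smul_re, Complex.sub_re, hτθ] at h2
    simp only [smul_eq_mul] at h2
    linarith
  -- bound τ(a a*) - τ(θa (θa)*) by 2 ‖a‖ L
  set L : ℝ := traceTwoNorm τ (a - θ a) with hLdef
  have hL0 : 0 ≤ L := Real.sqrt_nonneg _
  have hLsq : (τ (star (a - θ a) * (a - θ a))).re = L ^ 2 := by
    rw [hLdef, traceTwoNorm, Real.sq_sqrt (Complex.le_def.mp (hτpos (a - θ a))).1]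
  have hstarL : (τ ((a - θ a) * star (a - θ a))).re = L ^ 2 := by
    rw [hτtracial, hLsq]
  have main3 : (τ (a * star a)).re - (τ (θ a * star (θ a))).re ≤ 2 * ‖a‖ * L := by
    have hsplit : τ (a * star a) - τ (θ a * star (θ a))
        = τ ((a - θ a) * star a) + τ (θ a * (star a - star (θ a))) := by
      rw [← map_sub, ← map_add]
      congr 1
      noncomm_ring
    -- term 1
    have t1 : (τ ((a - θ a) * star a)).re ≤ L * ‖a‖ := by
      have h := ucp_tau_recs τ hτpos (star (a - θ a)) (star a)
      simp only [star_star] at h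
      have e1 : Real.sqrt (τ ((a - θ a) * star (a - θ a))).re = L := by
        rw [hstarL, Real.sqrt_sq hL0]
      have e2 : Real.sqrt (τ (a * star a)).re ≤ ‖a‖ := by
        have hb := ucp_norm2_bound τ hτ1 hτpos (star a)
        rw [star_star, norm_star] at hb
        calc Real.sqrt (τ (a * star a)).re ≤ Real.sqrt (‖a‖ ^ 2) := Real.sqrt_le_sqrt hb
          _ = ‖a‖ := Real.sqrt_sq (norm_nonneg a)
      calc (τ ((a - θ a) * star a)).re
          ≤ Real.sqrt (τ ((a - θ a) * star (a - θ a))).re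
            * Real.sqrt (τ (a * star a)).re := h
        _ ≤ L * ‖a‖ := by
            rw [e1]
            exact mul_le_mul_of_nonneg_left e2 hL0
    -- term 2
    have t2 : (τ (θ a * (star a - star (θ a)))).re ≤ ‖a‖ * L := by
      have h := ucp_tau_recs τ hτpos (star (θ a)) (star (a - θ a))
      simp only [star_star] at h
      have e1 : Real.sqrt (τ ((a - θ a) * star (a - θ a))).re = L := by
        rw [hstarL, Real.sqrt_sq hL0]
      have e2 : Real.sqrt (τ (θ a * star (θ a))).re ≤ ‖a‖ := by
        have htr : (τ (θ a * star (θ a))).re = (τ (star (θ a) * θ a)).re := by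
          rw [hτtracial]
        have hb := le_trans (hKS a) (ucp_norm2_bound τ hτ1 hτpos a)
        rw [htr]
        calc Real.sqrt (τ (star (θ a) * θ a)).re ≤ Real.sqrt (‖a‖ ^ 2) := Real.sqrt_le_sqrt hb
          _ = ‖a‖ := Real.sqrt_sq (norm_nonneg a)
      rw [show star a - star (θ a) = star (a - θ a) from (star_sub a (θ a)).symm]
      calc (τ (θ a * star (a - θ a))).re
          ≤ Real.sqrt (τ (θ a * star (θ a))).re
            * Real.sqrt (τ ((a - θ a) * star (a - θ a))).re := h
        _ ≤ ‖a‖ * L := by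
            rw [e1]
            exact mul_le_mul_of_nonneg_right e2 hL0
    have hre := congrArg Complex.re hsplit
    rw [Complex.sub_re, Complex.add_re] at hre
    linarith [t1, t2]
  -- final assembly
  have hdd2 : (τ (star (θ (a * x) - θ a * θ x) * (θ (a * x) - θ a * θ x))).re
      ≤ ‖x‖ ^ 2 * (2 * ‖a‖ * L) := by
    have htr : (τ (star (θ (a * x) - θ a * θ x) * (θ (a * x) - θ a * θ x))).re
        = (τ ((θ (a * x) - θ a * θ x) * star (θ (a * x) - θ a * θ x))).re := by
      rw [hτtracial]
    have h2 : ‖x‖ ^ 2 * ((τ (a * star a)).re - (τ (θ a * star (θ a))).re)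
        ≤ ‖x‖ ^ 2 * (2 * ‖a‖ * L) :=
      mul_le_mul_of_nonneg_left main3 (sq_nonneg _)
    rw [htr]
    linarith [main1, main2]
  rw [traceTwoNorm]
  have hRHS0 : 0 ≤ 2 * ‖x‖ * Real.sqrt ‖a‖ * Real.sqrt L := by positivity
  have hsq : ‖x‖ ^ 2 * (2 * ‖a‖ * L) ≤ (2 * ‖x‖ * Real.sqrt ‖a‖ * Real.sqrt L) ^ 2 := by
    have h1 : Real.sqrt ‖a‖ ^ 2 = ‖a‖ := Real.sq_sqrt (norm_nonneg a)
    have h2 : Real.sqrt L ^ 2 = L := Real.sq_sqrt hL0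
    have h3 : (2 * ‖x‖ * Real.sqrt ‖a‖ * Real.sqrt L) ^ 2 = 4 * (‖x‖ ^ 2 * (‖a‖ * L)) := by
      rw [mul_pow, mul_pow, mul_pow, h1, h2]; ring
    have h4 : 0 ≤ ‖x‖ ^ 2 * (‖a‖ * L) :=
      mul_nonneg (sq_nonneg _) (mul_nonneg (norm_nonneg a) hL0)
    rw [h3]
    linarith
  calc Real.sqrt (τ (star (θ (a * x) - θ a * θ x) * (θ (a * x) - θ a * θ x))).re
      ≤ Real.sqrt ((2 * ‖x‖ * Real.sqrt ‖a‖ * Real.sqrt L) ^ 2) :=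
        Real.sqrt_le_sqrt (le_trans hdd2 hsq)
    _ = 2 * ‖x‖ * Real.sqrt ‖a‖ * Real.sqrt L := Real.sqrt_sq hRHS0
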